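/- Let h be a Boolean function, let C₁, C₂ ⊆ I(h) be two sets of clauses each of which represents h, and let X ⊆ I(h) be an exclusive set of clauses of h. Then the conjunction of the clauses in C₁ ∩ X and the conjunction of the clauses in C₂ ∩ X represent the same Boolean function, and moreover the conjunction of the clauses in (C₁ ∖ X) ∪ (C₂ ∩ X) also represents h. -/

import Mathlib

open Finset

/-- A clause, given by its (fin)sets of positive and negative variables. -/
structure Clause (V : Type*) where
  pos : Finset V
  neg : Finset V
deriving DecidableEq

namespace Clause

variable {V : Type*}

/-- A genuine clause: no variable occurs both positively and negatively. -/
def IsClause (C : Clause V) : Prop := Disjoint C.pos C.neg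

/-- Evaluation of a clause (as a disjunction of literals) under an assignment. -/
def eval (C : Clause V) (a : V → Bool) : Prop :=
  (∃ v ∈ C.pos, a v = true) ∨ (∃ v ∈ C.neg, a v = false)

/-- A pure (definite) Horn clause: exactly one positive literal, its head. -/
def IsPureHorn (C : Clause V) : Prop := ∃ v, C.pos = {v}

end Clause

variable {V : Type*}

/-- Conjunction (as a predicate on assignments) of a set of clauses. -/
def evalSet (S : Set (Clause V)) (a : V → Bool) : Prop := ∀ C ∈ S, C.eval a

/-- Conjunction of the clauses of a CNF, i.e. of a finite set of clauses. -/
def evalCNF (Φ : Finset (Clause V)) (a : V → Bool) : Prop := ∀ C ∈ Φ, C.eval a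

/-- A CNF represents a Boolean function `h`. -/
def Represents (Φ : Finset (Clause V)) (h : (V → Bool) → Prop) : Prop :=
  ∀ a, evalCNF Φ a ↔ h a

/-- A pure Horn CNF: all clauses are pure Horn. -/
def IsPureHornCNF (Φ : Finset (Clause V)) : Prop :=
  ∀ C ∈ Φ, C.IsClause ∧ C.IsPureHorn

/-- The forward chaining closure of a set `Q` of variables with respect to the
pure Horn CNF `Φ`: the smallest set containing `Q` such that whenever `Φ` contains
a clause `S → v` with `S` inside the set, also `v` belongs to it. -/
def fcClosure (Φ : Finset (Clause V)) (Q : Set V) : Set V :=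
  ⋂₀ {T : Set V | Q ⊆ T ∧ ∀ C ∈ Φ, ∀ v : V, C.pos = {v} → ↑C.neg ⊆ T → v ∈ T}

/-- `C` is an implicate of `h`: every assignment falsifying `C` falsifies `h`. -/
def Implicate (h : (V → Bool) → Prop) (C : Clause V) : Prop :=
  ∀ a, ¬ C.eval a → ¬ h a

/-- `C` is a prime implicate of `h`: an implicate from which no literal can be
deleted while remaining an implicate. -/
def PrimeImplicate [DecidableEq V] (h : (V → Bool) → Prop) (C : Clause V) : Prop :=
  C.IsClause ∧ Implicate h C ∧
  (∀ v ∈ C.pos, ¬ Implicate h ⟨C.pos.erase v, C.neg⟩) ∧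
  (∀ v ∈ C.neg, ¬ Implicate h ⟨C.pos, C.neg.erase v⟩)

/-- `C₁` and `C₂` are resolvable on `v`: `v` occurs positively in `C₁`, negatively in
`C₂`, and no other variable occurs with opposite signs in them. -/
def Resolvable (C₁ C₂ : Clause V) (v : V) : Prop :=
  v ∈ C₁.pos ∧ v ∈ C₂.neg ∧
  ∀ w, w ≠ v → ¬(w ∈ C₁.pos ∧ w ∈ C₂.neg) ∧ ¬(w ∈ C₁.neg ∧ w ∈ C₂.pos)

/-- The resolvent `R(C₁,C₂) = (C₁ \ {v}) ∪ (C₂ \ {v̄})`. -/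
def resolventOf [DecidableEq V] (C₁ C₂ : Clause V) (v : V) : Clause V :=
  ⟨C₁.pos.erase v ∪ C₂.pos, C₁.neg ∪ C₂.neg.erase v⟩

/-- A set of clauses closed under resolution. -/
def ResClosed [DecidableEq V] (S : Set (Clause V)) : Prop :=
  ∀ C₁ ∈ S, ∀ C₂ ∈ S, ∀ v, Resolvable C₁ C₂ v → resolventOf C₁ C₂ v ∈ S

/-- The resolution closure of a set of clauses. -/
def resClosure [DecidableEq V] (S : Set (Clause V)) : Set (Clause V) :=
  ⋂₀ {T : Set (Clause V) | S ⊆ T ∧ ResClosed T}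

/-- `I(h)`: the resolution closure of the set of prime implicates of `h`. -/
def implSet [DecidableEq V] (h : (V → Bool) → Prop) : Set (Clause V) :=
  resClosure {C | PrimeImplicate h C}

/-- An exclusive set of clauses of `h`. -/
def ExclusiveSet [DecidableEq V] (h : (V → Bool) → Prop) (Xs : Set (Clause V)) : Prop :=
  Xs ⊆ implSet h ∧
  ∀ C₁ ∈ implSet h, ∀ C₂ ∈ implSet h, ∀ v, Resolvable C₁ C₂ v →
    resolventOf C₁ C₂ v ∈ Xs → C₁ ∈ Xs ∧ C₂ ∈ Xs

/-- The set of variables occurring in a CNF. -/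
def varsOf [DecidableEq V] (Φ : Finset (Clause V)) : Finset V :=
  Φ.biUnion fun C => C.pos ∪ C.neg



section AuxProof
set_option linter.unusedSectionVars false
variable {V : Type*} [DecidableEq V]
open Finset

-- lemmas
lemma Clause.ext' {C D : Clause V} (h1 : C.pos = D.pos) (h2 : C.neg = D.neg) :
    C = D := by cases C; cases D; cases h1; cases h2; rfl

lemma eval_congr {C : Clause V} {a a' : V → Bool}
    (h : ∀ v ∈ C.pos ∪ C.neg, a v = a' v) : C.eval a ↔ C.eval a' := by
  unfold Clause.eval
  constructor <;> rintro (⟨v, hv, hav⟩ | ⟨v, hv, hav⟩)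
  · exact Or.inl ⟨v, hv, by rw [← h v (mem_union_left _ hv)]; exact hav⟩
  · exact Or.inr ⟨v, hv, by rw [← h v (mem_union_right _ hv)]; exact hav⟩
  · exact Or.inl ⟨v, hv, by rw [h v (mem_union_left _ hv)]; exact hav⟩
  · exact Or.inr ⟨v, hv, by rw [h v (mem_union_right _ hv)]; exact hav⟩

lemma eval_mono {C C' : Clause V} (hp : C.pos ⊆ C'.pos) (hn : C.neg ⊆ C'.neg)
    {a : V → Bool} (h : C.eval a) : C'.eval a := by
  rcases h with ⟨v, hv, hav⟩ | ⟨v, hv, hav⟩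
  · exact Or.inl ⟨v, hp hv, hav⟩
  · exact Or.inr ⟨v, hn hv, hav⟩

lemma subset_resClosure (S : Set (Clause V)) : S ⊆ resClosure S :=
  fun _ hC => Set.mem_sInter.2 fun _ hT => hT.1 hC

lemma resClosed_resClosure (S : Set (Clause V)) : ResClosed (resClosure S) :=
  fun C₁ h1 C₂ h2 v hr => Set.mem_sInter.2 fun T hT =>
    hT.2 C₁ (Set.mem_sInter.1 h1 T hT) C₂ (Set.mem_sInter.1 h2 T hT) v hr

lemma resClosure_min {S T : Set (Clause V)} (hST : S ⊆ T) (hT : ResClosed T) :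
    resClosure S ⊆ T := fun _ hC => Set.mem_sInter.1 hC T ⟨hST, hT⟩

lemma resClosure_mono {S T : Set (Clause V)} (h : S ⊆ T) :
    resClosure S ⊆ resClosure T :=
  resClosure_min (h.trans (subset_resClosure T)) (resClosed_resClosure T)

lemma eval_resolvent {C₁ C₂ : Clause V} {v : V} (hr : Resolvable C₁ C₂ v)
    {a : V → Bool} (h1 : C₁.eval a) (h2 : C₂.eval a) : (resolventOf C₁ C₂ v).eval a := by
  obtain ⟨hv1, hv2, hw⟩ := hr
  simp only [resolventOf, Clause.eval]
  by_cases hav : a v = true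
  · rcases h2 with ⟨w, hwm, hwa⟩ | ⟨w, hwm, hwa⟩
    · exact Or.inl ⟨w, mem_union_right _ hwm, hwa⟩
    · have hwv : w ≠ v := by rintro rfl; rw [hav] at hwa; exact absurd hwa (by simp)
      exact Or.inr ⟨w, mem_union_right _ (mem_erase.2 ⟨hwv, hwm⟩), hwa⟩
  · rcases h1 with ⟨w, hwm, hwa⟩ | ⟨w, hwm, hwa⟩
    · have hwv : w ≠ v := by rintro rfl; exact hav hwa
      exact Or.inl ⟨w, mem_union_left _ (mem_erase.2 ⟨hwv, hwm⟩), hwa⟩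
    · exact Or.inr ⟨w, mem_union_left _ hwm, hwa⟩

lemma isOpen_evalSet (C : Clause V) : IsOpen {a : V → Bool | C.eval a} := by
  have : {a : V → Bool | C.eval a} =
      (⋃ v ∈ (↑C.pos : Set V), (fun a : V → Bool => a v) ⁻¹' {true}) ∪
      ⋃ v ∈ (↑C.neg : Set V), (fun a : V → Bool => a v) ⁻¹' {false} := by
    ext a; simp [Clause.eval]
  rw [this]
  exact (isOpen_biUnion fun v _ => (isOpen_discrete _).preimage (continuous_apply v)).union
    (isOpen_biUnion fun v _ => (isOpen_discrete _).preimage (continuous_apply v))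

lemma isClosed_evalSet (C : Clause V) : IsClosed {a : V → Bool | C.eval a} := by
  have : {a : V → Bool | C.eval a} =
      (⋃ v ∈ (↑C.pos : Set V), (fun a : V → Bool => a v) ⁻¹' {true}) ∪
      ⋃ v ∈ (↑C.neg : Set V), (fun a : V → Bool => a v) ⁻¹' {false} := by
    ext a; simp [Clause.eval]
  rw [this]
  exact (Set.Finite.isClosed_biUnion C.pos.finite_toSet fun v _ =>
      isClosed_singleton.preimage (continuous_apply v)).union
    (Set.Finite.isClosed_biUnion C.neg.finite_toSet fun v _ =>
      isClosed_singleton.preimage (continuous_apply v))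

lemma finite_subimplicate (𝒞 : Set (Clause V)) (D : Clause V)
    (h : ∀ a, ¬ D.eval a → ∃ C ∈ 𝒞, ¬ C.eval a) :
    ∃ Φ : Finset (Clause V), ↑Φ ⊆ 𝒞 ∧ ∀ a, ¬ D.eval a → ∃ C ∈ Φ, ¬ C.eval a := by
  have hK : IsCompact {a : V → Bool | ¬ D.eval a} :=
    ((isOpen_evalSet D).isClosed_compl).isCompact
  have hst : {a : V → Bool | ¬ D.eval a} ∩ ⋂ C : 𝒞, {a : V → Bool | (C : Clause V).eval a} = ∅ := by
    ext a
    simp only [Set.mem_inter_iff, Set.mem_iInter, Set.mem_setOf_eq, Set.mem_empty_iff_false,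
      iff_false, not_and, not_forall]
    intro ha
    obtain ⟨C, hC, hCa⟩ := h a ha
    exact ⟨⟨C, hC⟩, hCa⟩
  obtain ⟨u, hu⟩ := hK.elim_finite_subfamily_closed
    (fun C : 𝒞 => {a : V → Bool | (C : Clause V).eval a})
    (fun C => isClosed_evalSet _) hst
  refine ⟨u.image Subtype.val, ?_, ?_⟩
  · intro C hC
    simp only [coe_image, Set.mem_image, mem_coe] at hC
    obtain ⟨⟨C', hC'⟩, _, rfl⟩ := hC; exact hC'
  · intro a ha
    by_contra hno; push_neg at hno
    have hmem : a ∈ {a : V → Bool | ¬ D.eval a} ∩ ⋂ i ∈ u, {a : V → Bool | (i : Clause V).eval a} := by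
      refine ⟨ha, Set.mem_iInter₂.2 fun i hi => ?_⟩
      exact hno i (mem_image_of_mem _ hi)
    rw [hu] at hmem
    exact hmem

lemma insert_resolvent_pos {E₁ E₂ : Clause V} {v x : V} (hvx : v ≠ x)
    (hE1p : x ∉ E₁.pos) :
    (insert x E₁.pos).erase v ∪ insert x E₂.pos = insert x (E₁.pos.erase v ∪ E₂.pos) := by
  rw [Finset.erase_insert_of_ne (Ne.symm hvx), Finset.insert_union, Finset.union_insert,
    Finset.insert_idem]

lemma lift_pos (Φ : Finset (Clause V)) (x : V) :
    resClosure (↑((Φ.filter fun C => x ∉ C.neg).image fun C =>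
      (⟨C.pos.erase x, C.neg⟩ : Clause V)) : Set (Clause V)) ⊆
    {E : Clause V | x ∉ E.pos ∧ x ∉ E.neg ∧
      (E ∈ resClosure ↑Φ ∨ (⟨insert x E.pos, E.neg⟩ : Clause V) ∈ resClosure ↑Φ)} := by
  apply resClosure_min
  · intro E hE
    simp only [coe_image, Set.mem_image, mem_coe, mem_filter] at hE
    obtain ⟨C, ⟨hCΦ, hCx⟩, rfl⟩ := hE
    refine ⟨notMem_erase _ _, hCx, ?_⟩
    by_cases hx : x ∈ C.pos
    · right
      have : (⟨insert x (C.pos.erase x), C.neg⟩ : Clause V) = C :=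
        Clause.ext' (by rw [insert_erase hx]) rfl
      rw [this]; exact subset_resClosure _ hCΦ
    · left
      have : (⟨C.pos.erase x, C.neg⟩ : Clause V) = C :=
        Clause.ext' (erase_eq_of_notMem hx) rfl
      rw [this]; exact subset_resClosure _ hCΦ
  · rintro E₁ ⟨hE1p, hE1n, hE1⟩ E₂ ⟨hE2p, hE2n, hE2⟩ v hr
    have hRc := resClosed_resClosure (↑Φ : Set (Clause V))
    obtain ⟨hv1, hv2, hw⟩ := hr
    have hvx : v ≠ x := fun hvx => hE1p (hvx ▸ hv1)
    refine ⟨?_, ?_, ?_⟩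
    · simp only [resolventOf, mem_union, mem_erase]
      rintro (⟨_, hc⟩ | hc)
      · exact hE1p hc
      · exact hE2p hc
    · simp only [resolventOf, mem_union, mem_erase]
      rintro (hc | ⟨_, hc⟩)
      · exact hE1n hc
      · exact hE2n hc
    · rcases hE1 with h1 | h1 <;> rcases hE2 with h2 | h2
      · exact Or.inl (hRc _ h1 _ h2 v ⟨hv1, hv2, hw⟩)
      · right
        have hres : Resolvable E₁ ⟨E₂.pos, E₂.neg⟩ v := ⟨hv1, hv2, hw⟩
        have hres2 : Resolvable E₁ ⟨insert x E₂.pos, E₂.neg⟩ v := by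
          refine ⟨hv1, hv2, fun w hwv => ⟨(hw w hwv).1, ?_⟩⟩
          rintro ⟨hw1, hw2⟩
          rcases mem_insert.1 hw2 with rfl | hw2
          · exact hE1n hw1
          · exact (hw w hwv).2 ⟨hw1, hw2⟩
        have hmem := hRc _ h1 _ h2 v hres2
        have heq : resolventOf E₁ ⟨insert x E₂.pos, E₂.neg⟩ v =
            ⟨insert x (resolventOf E₁ E₂ v).pos, (resolventOf E₁ E₂ v).neg⟩ :=
          Clause.ext' (by simp only [resolventOf, Finset.union_insert]) rfl
        rwa [heq] at hmem
      · right
        have hres2 : Resolvable ⟨insert x E₁.pos, E₁.neg⟩ E₂ v := by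
          refine ⟨mem_insert_of_mem hv1, hv2, fun w hwv => ⟨?_, (hw w hwv).2⟩⟩
          rintro ⟨hw1, hw2⟩
          rcases mem_insert.1 hw1 with rfl | hw1
          · exact hE2n hw2
          · exact (hw w hwv).1 ⟨hw1, hw2⟩
        have hmem := hRc _ h1 _ h2 v hres2
        have heq : resolventOf ⟨insert x E₁.pos, E₁.neg⟩ E₂ v =
            ⟨insert x (resolventOf E₁ E₂ v).pos, (resolventOf E₁ E₂ v).neg⟩ :=
          Clause.ext' (by
            simp only [resolventOf]
            rw [Finset.erase_insert_of_ne (Ne.symm hvx), Finset.insert_union]) rfl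
        rwa [heq] at hmem
      · right
        have hres2 : Resolvable ⟨insert x E₁.pos, E₁.neg⟩ ⟨insert x E₂.pos, E₂.neg⟩ v := by
          refine ⟨mem_insert_of_mem hv1, hv2, fun w hwv => ⟨?_, ?_⟩⟩
          · rintro ⟨hw1, hw2⟩
            rcases mem_insert.1 hw1 with rfl | hw1
            · exact hE2n hw2
            · exact (hw w hwv).1 ⟨hw1, hw2⟩
          · rintro ⟨hw1, hw2⟩
            rcases mem_insert.1 hw2 with rfl | hw2
            · exact hE1n hw1
            · exact (hw w hwv).2 ⟨hw1, hw2⟩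
        have hmem := hRc _ h1 _ h2 v hres2
        have heq : resolventOf ⟨insert x E₁.pos, E₁.neg⟩ ⟨insert x E₂.pos, E₂.neg⟩ v =
            ⟨insert x (resolventOf E₁ E₂ v).pos, (resolventOf E₁ E₂ v).neg⟩ :=
          Clause.ext' (insert_resolvent_pos hvx hE1p) rfl
        rwa [heq] at hmem

lemma insert_resolvent_neg {E₁ E₂ : Clause V} {v x : V} (hvx : v ≠ x) :
    insert x E₁.neg ∪ (insert x E₂.neg).erase v = insert x (E₁.neg ∪ E₂.neg.erase v) := by
  rw [Finset.erase_insert_of_ne (Ne.symm hvx), Finset.insert_union, Finset.union_insert,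
    Finset.insert_idem]

lemma lift_neg (Φ : Finset (Clause V)) (x : V) :
    resClosure (↑((Φ.filter fun C => x ∉ C.pos).image fun C =>
      (⟨C.pos, C.neg.erase x⟩ : Clause V)) : Set (Clause V)) ⊆
    {E : Clause V | x ∉ E.pos ∧ x ∉ E.neg ∧
      (E ∈ resClosure ↑Φ ∨ (⟨E.pos, insert x E.neg⟩ : Clause V) ∈ resClosure ↑Φ)} := by
  apply resClosure_min
  · intro E hE
    simp only [coe_image, Set.mem_image, mem_coe, mem_filter] at hE
    obtain ⟨C, ⟨hCΦ, hCx⟩, rfl⟩ := hE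
    refine ⟨hCx, notMem_erase _ _, ?_⟩
    by_cases hx : x ∈ C.neg
    · right
      have : (⟨C.pos, insert x (C.neg.erase x)⟩ : Clause V) = C :=
        Clause.ext' rfl (by rw [insert_erase hx])
      rw [this]; exact subset_resClosure _ hCΦ
    · left
      have : (⟨C.pos, C.neg.erase x⟩ : Clause V) = C :=
        Clause.ext' rfl (erase_eq_of_notMem hx)
      rw [this]; exact subset_resClosure _ hCΦ
  · rintro E₁ ⟨hE1p, hE1n, hE1⟩ E₂ ⟨hE2p, hE2n, hE2⟩ v hr
    have hRc := resClosed_resClosure (↑Φ : Set (Clause V))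
    obtain ⟨hv1, hv2, hw⟩ := hr
    have hvx : v ≠ x := fun hvx => hE2n (hvx ▸ hv2)
    refine ⟨?_, ?_, ?_⟩
    · simp only [resolventOf, mem_union, mem_erase]
      rintro (⟨_, hc⟩ | hc)
      · exact hE1p hc
      · exact hE2p hc
    · simp only [resolventOf, mem_union, mem_erase]
      rintro (hc | ⟨_, hc⟩)
      · exact hE1n hc
      · exact hE2n hc
    · rcases hE1 with h1 | h1 <;> rcases hE2 with h2 | h2
      · exact Or.inl (hRc _ h1 _ h2 v ⟨hv1, hv2, hw⟩)
      · right
        have hres2 : Resolvable E₁ ⟨E₂.pos, insert x E₂.neg⟩ v := by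
          refine ⟨hv1, mem_insert_of_mem hv2, fun w hwv => ⟨?_, (hw w hwv).2⟩⟩
          rintro ⟨hw1, hw2⟩
          rcases mem_insert.1 hw2 with rfl | hw2
          · exact hE1p hw1
          · exact (hw w hwv).1 ⟨hw1, hw2⟩
        have hmem := hRc _ h1 _ h2 v hres2
        have heq : resolventOf E₁ ⟨E₂.pos, insert x E₂.neg⟩ v =
            ⟨(resolventOf E₁ E₂ v).pos, insert x (resolventOf E₁ E₂ v).neg⟩ :=
          Clause.ext' rfl (by
            simp only [resolventOf]
            rw [Finset.erase_insert_of_ne (Ne.symm hvx), Finset.union_insert])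
        rwa [heq] at hmem
      · right
        have hres2 : Resolvable ⟨E₁.pos, insert x E₁.neg⟩ E₂ v := by
          refine ⟨hv1, hv2, fun w hwv => ⟨(hw w hwv).1, ?_⟩⟩
          rintro ⟨hw1, hw2⟩
          rcases mem_insert.1 hw1 with rfl | hw1
          · exact hE2p hw2
          · exact (hw w hwv).2 ⟨hw1, hw2⟩
        have hmem := hRc _ h1 _ h2 v hres2
        have heq : resolventOf ⟨E₁.pos, insert x E₁.neg⟩ E₂ v =
            ⟨(resolventOf E₁ E₂ v).pos, insert x (resolventOf E₁ E₂ v).neg⟩ :=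
          Clause.ext' rfl (by simp only [resolventOf, Finset.insert_union])
        rwa [heq] at hmem
      · right
        have hres2 : Resolvable ⟨E₁.pos, insert x E₁.neg⟩ ⟨E₂.pos, insert x E₂.neg⟩ v := by
          refine ⟨hv1, mem_insert_of_mem hv2, fun w hwv => ⟨?_, ?_⟩⟩
          · rintro ⟨hw1, hw2⟩
            rcases mem_insert.1 hw2 with rfl | hw2
            · exact hE1p hw1
            · exact (hw w hwv).1 ⟨hw1, hw2⟩
          · rintro ⟨hw1, hw2⟩
            rcases mem_insert.1 hw1 with rfl | hw1
            · exact hE2p hw2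
            · exact (hw w hwv).2 ⟨hw1, hw2⟩
        have hmem := hRc _ h1 _ h2 v hres2
        have heq : resolventOf ⟨E₁.pos, insert x E₁.neg⟩ ⟨E₂.pos, insert x E₂.neg⟩ v =
            ⟨(resolventOf E₁ E₂ v).pos, insert x (resolventOf E₁ E₂ v).neg⟩ :=
          Clause.ext' rfl (insert_resolvent_neg hvx)
        rwa [heq] at hmem

lemma resolution_complete (D : Clause V) (hD : D.IsClause) (W : Finset V) :
    ∀ Φ : Finset (Clause V),
      (∀ C ∈ Φ, C.pos ∪ C.neg ⊆ W ∪ D.pos ∪ D.neg) →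
      (∀ a : V → Bool, ¬ D.eval a → ∃ C ∈ Φ, ¬ C.eval a) →
      ∃ E ∈ resClosure (↑Φ : Set (Clause V)), E.pos ⊆ D.pos ∧ E.neg ⊆ D.neg := by
  induction W using Finset.induction_on with
  | empty =>
    intro Φ hvars himp
    set a : V → Bool := fun v => decide (v ∈ D.neg) with ha
    have hDa : ¬ D.eval a := by
      rintro (⟨v, hv, hva⟩ | ⟨v, hv, hva⟩)
      · rw [ha] at hva; simp only [decide_eq_true_eq] at hva
        exact (Finset.disjoint_left.1 hD) hv hva
      · rw [ha] at hva; simp only [decide_eq_false_iff_not] at hva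
        exact hva hv
    obtain ⟨C, hCΦ, hCa⟩ := himp a hDa
    refine ⟨C, subset_resClosure _ hCΦ, ?_, ?_⟩
    · intro v hv
      have hva : ¬ (a v = true) := fun hc => hCa (Or.inl ⟨v, hv, hc⟩)
      rw [ha] at hva; simp only [decide_eq_true_eq] at hva
      have := hvars C hCΦ (mem_union_left _ hv)
      simp only [empty_union, mem_union] at this
      tauto
    · intro v hv
      have hva : ¬ (a v = false) := fun hc => hCa (Or.inr ⟨v, hv, hc⟩)
      rw [ha] at hva; simp only [decide_eq_false_iff_not, not_not] at hva
      exact hva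
  | @insert x W hxW ih =>
    intro Φ hvars himp
    by_cases hxD : x ∈ D.pos ∪ D.neg
    · refine ih Φ (fun C hC v hv => ?_) himp
      have := hvars C hC hv
      simp only [mem_union, mem_insert] at this ⊢
      rcases this with ((rfl | h) | h) | h
      · rcases mem_union.1 hxD with h | h
        · exact Or.inl (Or.inr h)
        · exact Or.inr h
      · exact Or.inl (Or.inl h)
      · exact Or.inl (Or.inr h)
      · exact Or.inr h
    · -- x occurs neither in D
      have hxDp : x ∉ D.pos := fun h => hxD (mem_union_left _ h)
      have hxDn : x ∉ D.neg := fun h => hxD (mem_union_right _ h)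
      set Φ₀ : Finset (Clause V) :=
        (Φ.filter fun C => x ∉ C.neg).image fun C => ⟨C.pos.erase x, C.neg⟩ with hΦ₀
      set Φ₁ : Finset (Clause V) :=
        (Φ.filter fun C => x ∉ C.pos).image fun C => ⟨C.pos, C.neg.erase x⟩ with hΦ₁
      have hvars₀ : ∀ C ∈ Φ₀, C.pos ∪ C.neg ⊆ W ∪ D.pos ∪ D.neg := by
        intro C hC
        simp only [hΦ₀, mem_image, mem_filter] at hC
        obtain ⟨C', ⟨hC'Φ, hC'x⟩, rfl⟩ := hC
        intro v hv
        have hvx : v ≠ x := by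
          rcases mem_union.1 hv with h | h
          · exact (mem_erase.1 h).1
          · exact fun hc => hC'x (hc ▸ h)
        have hv' : v ∈ C'.pos ∪ C'.neg := by
          rcases mem_union.1 hv with h | h
          · exact mem_union_left _ (mem_erase.1 h).2
          · exact mem_union_right _ h
        have := hvars C' hC'Φ hv'
        simp only [mem_union, mem_insert] at this ⊢
        tauto
      have hvars₁ : ∀ C ∈ Φ₁, C.pos ∪ C.neg ⊆ W ∪ D.pos ∪ D.neg := by
        intro C hC
        simp only [hΦ₁, mem_image, mem_filter] at hC
        obtain ⟨C', ⟨hC'Φ, hC'x⟩, rfl⟩ := hC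
        intro v hv
        have hvx : v ≠ x := by
          rcases mem_union.1 hv with h | h
          · exact fun hc => hC'x (hc ▸ h)
          · exact (mem_erase.1 h).1
        have hv' : v ∈ C'.pos ∪ C'.neg := by
          rcases mem_union.1 hv with h | h
          · exact mem_union_left _ h
          · exact mem_union_right _ (mem_erase.1 h).2
        have := hvars C' hC'Φ hv'
        simp only [mem_union, mem_insert] at this ⊢
        tauto
      have himp₀ : ∀ a : V → Bool, ¬ D.eval a → ∃ C ∈ Φ₀, ¬ C.eval a := by
        intro a ha
        set a' := Function.update a x false with ha'
        have hDa' : ¬ D.eval a' := by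
          rw [← eval_congr (a := a)]
          · exact ha
          · intro v hv
            have hvx : v ≠ x := fun hc => hxD (hc ▸ hv)
            rw [ha', Function.update_of_ne hvx]
        obtain ⟨C, hCΦ, hCa'⟩ := himp a' hDa'
        have hxC : x ∉ C.neg := by
          intro hc
          exact hCa' (Or.inr ⟨x, hc, by rw [ha', Function.update_self]⟩)
        refine ⟨⟨C.pos.erase x, C.neg⟩, ?_, ?_⟩
        · simp only [hΦ₀, mem_image, mem_filter]
          exact ⟨C, ⟨hCΦ, hxC⟩, rfl⟩
        · rintro (⟨v, hv, hva⟩ | ⟨v, hv, hva⟩)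
          · obtain ⟨hvx, hv⟩ := mem_erase.1 hv
            exact hCa' (Or.inl ⟨v, hv, by rw [ha', Function.update_of_ne hvx]; exact hva⟩)
          · have hvx : v ≠ x := fun hc => hxC (hc ▸ hv)
            exact hCa' (Or.inr ⟨v, hv, by rw [ha', Function.update_of_ne hvx]; exact hva⟩)
      have himp₁ : ∀ a : V → Bool, ¬ D.eval a → ∃ C ∈ Φ₁, ¬ C.eval a := by
        intro a ha
        set a' := Function.update a x true with ha'
        have hDa' : ¬ D.eval a' := by
          rw [← eval_congr (a := a)]
          · exact ha
          · intro v hv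
            have hvx : v ≠ x := fun hc => hxD (hc ▸ hv)
            rw [ha', Function.update_of_ne hvx]
        obtain ⟨C, hCΦ, hCa'⟩ := himp a' hDa'
        have hxC : x ∉ C.pos := by
          intro hc
          exact hCa' (Or.inl ⟨x, hc, by rw [ha', Function.update_self]⟩)
        refine ⟨⟨C.pos, C.neg.erase x⟩, ?_, ?_⟩
        · simp only [hΦ₁, mem_image, mem_filter]
          exact ⟨C, ⟨hCΦ, hxC⟩, rfl⟩
        · rintro (⟨v, hv, hva⟩ | ⟨v, hv, hva⟩)
          · have hvx : v ≠ x := fun hc => hxC (hc ▸ hv)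
            exact hCa' (Or.inl ⟨v, hv, by rw [ha', Function.update_of_ne hvx]; exact hva⟩)
          · obtain ⟨hvx, hv⟩ := mem_erase.1 hv
            exact hCa' (Or.inr ⟨v, hv, by rw [ha', Function.update_of_ne hvx]; exact hva⟩)
      obtain ⟨E₀, hE₀R, hE₀p, hE₀n⟩ := ih Φ₀ hvars₀ himp₀
      obtain ⟨E₁, hE₁R, hE₁p, hE₁n⟩ := ih Φ₁ hvars₁ himp₁
      obtain ⟨hE₀x, hE₀x', hE₀lift⟩ := lift_pos Φ x hE₀R
      obtain ⟨hE₁x, hE₁x', hE₁lift⟩ := lift_neg Φ x hE₁R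
      rcases hE₀lift with h₀ | h₀
      · exact ⟨E₀, h₀, hE₀p, hE₀n⟩
      rcases hE₁lift with h₁ | h₁
      · exact ⟨E₁, h₁, hE₁p, hE₁n⟩
      -- resolve the two lifted clauses on x
      have hres : Resolvable ⟨insert x E₀.pos, E₀.neg⟩ ⟨E₁.pos, insert x E₁.neg⟩ x := by
        refine ⟨mem_insert_self _ _, mem_insert_self _ _, fun w hwx => ⟨?_, ?_⟩⟩
        · rintro ⟨hw1, hw2⟩
          rcases mem_insert.1 hw1 with rfl | hw1
          · exact hwx rfl
          · rcases mem_insert.1 hw2 with rfl | hw2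
            · exact hwx rfl
            · exact (Finset.disjoint_left.1 hD) (hE₀p hw1) (hE₁n hw2)
        · rintro ⟨hw1, hw2⟩
          exact (Finset.disjoint_left.1 hD) (hE₁p hw2) (hE₀n hw1)
      have hmem := resClosed_resClosure (↑Φ : Set (Clause V)) _ h₀ _ h₁ x hres
      refine ⟨_, hmem, ?_, ?_⟩
      · simp only [resolventOf]
        rw [Finset.erase_insert hE₀x]
        exact union_subset hE₀p hE₁p
      · simp only [resolventOf]
        rw [Finset.erase_insert hE₁x']
        exact union_subset hE₀n hE₁n


lemma implicate_resClosed (h : (V → Bool) → Prop) :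
    ResClosed {C : Clause V | Implicate h C} := by
  intro C₁ h1 C₂ h2 v hr a ha hha
  have he1 : C₁.eval a := by by_contra hc; exact h1 a hc hha
  have he2 : C₂.eval a := by by_contra hc; exact h2 a hc hha
  exact ha (eval_resolvent hr he1 he2)

lemma implSet_implicate {h : (V → Bool) → Prop} {C : Clause V}
    (hC : C ∈ implSet h) : Implicate h C :=
  resClosure_min (fun _ hD => hD.2.1) (implicate_resClosed h) hC

lemma implicate_mono {h : (V → Bool) → Prop} {C C' : Clause V} (hi : Implicate h C)
    (hp : C.pos ⊆ C'.pos) (hn : C.neg ⊆ C'.neg) : Implicate h C' :=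
  fun a ha => hi a fun he => ha (eval_mono hp hn he)

lemma implSet_subset_resClosure (h : (V → Bool) → Prop) (𝒞 : Set (Clause V))
    (h𝒞 : 𝒞 ⊆ implSet h) (hrep : ∀ a, evalSet 𝒞 a ↔ h a) :
    implSet h ⊆ resClosure 𝒞 := by
  have hCR : resClosure 𝒞 ⊆ implSet h := resClosure_min h𝒞 (resClosed_resClosure _)
  apply resClosure_min ?_ (resClosed_resClosure 𝒞)
  intro D hDp
  obtain ⟨hDc, hDi, hDpos, hDneg⟩ := hDp
  have himp : ∀ a, ¬ D.eval a → ∃ C ∈ 𝒞, ¬ C.eval a := by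
    intro a ha
    by_contra hno; push_neg at hno
    exact hDi a ha ((hrep a).1 hno)
  obtain ⟨Φ, hΦsub, hΦ⟩ := finite_subimplicate 𝒞 D himp
  obtain ⟨E, hER, hEp, hEn⟩ := resolution_complete D hDc (varsOf Φ) Φ
    (fun C hC v hv => mem_union_left _ (mem_union_left _ (mem_biUnion.2 ⟨C, hC, hv⟩)))
    hΦ
  have hE𝒞 : E ∈ resClosure 𝒞 := resClosure_mono hΦsub hER
  have hEimp : Implicate h E := implSet_implicate (hCR hE𝒞)
  have hpe : D.pos = E.pos := by
    refine Finset.Subset.antisymm ?_ hEp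
    intro v hv
    by_contra hvE
    refine hDpos v hv (implicate_mono hEimp ?_ hEn)
    intro w hw
    exact mem_erase.2 ⟨fun hc => hvE (hc ▸ hw), hEp hw⟩
  have hne : D.neg = E.neg := by
    refine Finset.Subset.antisymm ?_ hEn
    intro v hv
    by_contra hvE
    refine hDneg v hv (implicate_mono hEimp hEp ?_)
    intro w hw
    exact mem_erase.2 ⟨fun hc => hvE (hc ▸ hw), hEn hw⟩
  rw [Clause.ext' hpe hne]
  exact hE𝒞

lemma exclusive_sat (h : (V → Bool) → Prop) {𝒞 Xs : Set (Clause V)}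
    (h𝒞 : 𝒞 ⊆ implSet h) (hrep : ∀ a, evalSet 𝒞 a ↔ h a) (hX : ExclusiveSet h Xs)
    {a : V → Bool} (ha : evalSet (𝒞 ∩ Xs) a) :
    ∀ D ∈ implSet h, D ∈ Xs → D.eval a := by
  have hCR : resClosure 𝒞 ⊆ implSet h := resClosure_min h𝒞 (resClosed_resClosure _)
  have hT : resClosure 𝒞 ⊆ {C : Clause V | C ∈ resClosure 𝒞 ∧ (C ∈ Xs → C.eval a)} := by
    apply resClosure_min
    · intro C hC
      exact ⟨subset_resClosure _ hC, fun hCX => ha C ⟨hC, hCX⟩⟩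
    · rintro C₁ ⟨hC₁R, hC₁⟩ C₂ ⟨hC₂R, hC₂⟩ v hr
      refine ⟨resClosed_resClosure _ _ hC₁R _ hC₂R v hr, fun hRX => ?_⟩
      obtain ⟨hX1, hX2⟩ := hX.2 C₁ (hCR hC₁R) C₂ (hCR hC₂R) v hr hRX
      exact eval_resolvent hr (hC₁ hX1) (hC₂ hX2)
  intro D hD hDX
  exact (hT (implSet_subset_resClosure h 𝒞 h𝒞 hrep hD)).2 hDX

end AuxProof

/-- Boros et al.. Let `h` be a Boolean function, `𝒞₁, 𝒞₂ ⊆ I(h)`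
two sets of clauses each representing `h`, and `Xs ⊆ I(h)` an exclusive set of
clauses of `h`.  Then `𝒞₁ ∩ Xs` and `𝒞₂ ∩ Xs` represent the same Boolean function,
and `(𝒞₁ \ Xs) ∪ (𝒞₂ ∩ Xs)` also represents `h`. -/
theorem exclusive_component_switch {V : Type*} [DecidableEq V]
    (h : (V → Bool) → Prop) (𝒞₁ 𝒞₂ Xs : Set (Clause V))
    (h𝒞₁ : 𝒞₁ ⊆ implSet h) (h𝒞₂ : 𝒞₂ ⊆ implSet h)
    (hrep₁ : ∀ a, evalSet 𝒞₁ a ↔ h a)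
    (hrep₂ : ∀ a, evalSet 𝒞₂ a ↔ h a)
    (hX : ExclusiveSet h Xs) :
    (∀ a, evalSet (𝒞₁ ∩ Xs) a ↔ evalSet (𝒞₂ ∩ Xs) a) ∧
    (∀ a, evalSet ((𝒞₁ \ Xs) ∪ (𝒞₂ ∩ Xs)) a ↔ h a) := by
  have key₁ := fun a (ha : evalSet (𝒞₁ ∩ Xs) a) => exclusive_sat h h𝒞₁ hrep₁ hX ha
  have key₂ := fun a (ha : evalSet (𝒞₂ ∩ Xs) a) => exclusive_sat h h𝒞₂ hrep₂ hX ha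
  constructor
  · intro a
    constructor
    · intro ha C hC
      exact key₁ a ha C (h𝒞₂ hC.1) hC.2
    · intro ha C hC
      exact key₂ a ha C (h𝒞₁ hC.1) hC.2
  · intro a
    constructor
    · intro ha
      apply (hrep₁ a).1
      intro C hC
      by_cases hCX : C ∈ Xs
      · exact key₂ a (fun C' hC' => ha C' (Or.inr hC')) C (h𝒞₁ hC) hCX
      · exact ha C (Or.inl ⟨hC, hCX⟩)
    · intro hha C hC
      have hCI : C ∈ implSet h := by
        rcases hC with ⟨h1, _⟩ | ⟨h1, _⟩
        exacts [h𝒞₁ h1, h𝒞₂ h1]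
      have hCi := implSet_implicate hCI
      by_contra hc
      exact hCi a hc hha
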